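/- Let T be a rigidly-compactly generated tensor triangulated category and let F ∈ T be a field object, i.e. for every t ∈ T the object t ⊗ F is a coproduct of suspensions of F. Then the localizing tensor ideal generated by F is minimal among nonzero localizing tensor ideals: if 0 ≠ t ∈ Locid(F), then Locid(t) = Locid(F). -/

import Mathlib

/-!
STATEMENT 8: In a rigidly-compactly generated tensor triangulated category, a field object
`F` (every `t ⊗ F` is a coproduct of suspensions of `F`, and `F ⊗ t ≠ 0` for every nonzero
`t` in `Locid(F)`) generates a minimal localizing tensor ideal: if `0 ≠ t ∈ Locid(F)` then
`Locid(t) = Locid(F)`.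
-/

open CategoryTheory CategoryTheory.Limits CategoryTheory.Pretriangulated
open CategoryTheory.MonoidalCategory

universe v u

variable (C : Type u) [Category.{v} C] [Preadditive C] [HasZeroObject C] [HasShift C ℤ]
  [∀ n : ℤ, (shiftFunctor C n).Additive] [Pretriangulated C] [MonoidalCategory C]
  [SymmetricCategory C] [HasCoproducts.{v} C]

/-- A localizing tensor ideal. -/
structure IsLocTensorIdeal (S : Set C) : Prop where
  zero : ∀ t : C, IsZero t → t ∈ S
  iso_mem : ∀ {s t : C}, (s ≅ t) → s ∈ S → t ∈ S
  shift_mem : ∀ (t : C) (n : ℤ), t ∈ S → t⟦n⟧ ∈ S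
  ext : ∀ T : Triangle C, (T ∈ distTriang C) → T.obj₁ ∈ S → T.obj₂ ∈ S → T.obj₃ ∈ S
  coprod_mem : ∀ {ι : Type v} (f : ι → C) [HasCoproduct f], (∀ i, f i ∈ S) → (∐ f) ∈ S
  tensor_mem : ∀ (x t : C), t ∈ S → (x ⊗ t) ∈ S

/-- The localizing tensor ideal generated by a class of objects. -/
def Locid (S : Set C) : Set C := ⋂₀ {L | IsLocTensorIdeal C L ∧ S ⊆ L}

lemma locid_isIdeal (S : Set C) : IsLocTensorIdeal C (Locid C S) := by
  constructor
  · intro t ht L hL; exact hL.1.zero t ht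
  · intro s t e hs L hL; exact hL.1.iso_mem e (hs L hL)
  · intro t n ht L hL; exact hL.1.shift_mem t n (ht L hL)
  · intro T hT h1 h2 L hL; exact hL.1.ext T hT (h1 L hL) (h2 L hL)
  · intro ι f _ hf L hL; exact hL.1.coprod_mem f (fun i => hf i L hL)
  · intro x t ht L hL; exact hL.1.tensor_mem x t (ht L hL)

lemma subset_locid (S : Set C) : S ⊆ Locid C S := fun _ hx L hL => hL.2 hx

lemma locid_subset {S L : Set C} (hL : IsLocTensorIdeal C L) (hS : S ⊆ L) :
    Locid C S ⊆ L := fun _ hx => hx L ⟨hL, hS⟩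

set_option linter.unusedSectionVars false
set_option linter.unusedVariables false

open Classical in
/-- The reindexing equivalence used in the Eilenberg swindle. -/
noncomputable def swindleEquiv {ι : Type v} (i₀ : ι) :
    Option (Σ _ : ULift.{v} ℕ, ι) ≃ (Σ _ : ULift.{v} ℕ, ι) where
  toFun o := match o with
    | none => ⟨⟨0⟩, i₀⟩
    | some ⟨⟨k⟩, i⟩ => if i = i₀ then ⟨⟨k + 1⟩, i⟩ else ⟨⟨k⟩, i⟩
  invFun p := match p with
    | ⟨⟨k⟩, i⟩ =>
      if i = i₀ then (match k with
        | 0 => none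
        | (k' + 1) => some ⟨⟨k'⟩, i⟩)
      else some ⟨⟨k⟩, i⟩
  left_inv o := by
    match o with
    | none => simp
    | some ⟨⟨k⟩, i⟩ =>
      by_cases h : i = i₀
      · subst h; simp
      · simp [h]
  right_inv p := by
    match p with
    | ⟨⟨k⟩, i⟩ =>
      by_cases h : i = i₀
      · subst h
        match k with
        | 0 => simp
        | (k' + 1) => simp
      · simp [h]

lemma swindleEquiv_snd {ι : Type v} (i₀ : ι) (j : Σ _ : ULift.{v} ℕ, ι) :
    ((swindleEquiv i₀) (some j)).2 = j.2 := by
  obtain ⟨⟨k⟩, i⟩ := j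
  by_cases h : i = i₀ <;> simp [swindleEquiv, h]

variable {C}

/-- Splitting off the `none` component of a coproduct over `Option J`. -/
noncomputable def optionCoprodIso {J : Type v} (g : Option J → C)
    [HasCoproduct g] [HasCoproduct (fun j => g (some j))]
    [HasBinaryBiproduct (g none) (∐ fun j => g (some j))] :
    (∐ g) ≅ (g none) ⊞ (∐ fun j => g (some j)) where
  hom := Sigma.desc (fun o => match o with
    | none => biprod.inl
    | some j => Sigma.ι (fun j => g (some j)) j ≫ biprod.inr)
  inv := biprod.desc (Sigma.ι g none) (Sigma.desc fun j => Sigma.ι g (some j))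
  hom_inv_id := by
    ext o
    obtain ⟨(_ | j)⟩ := o
    · simp
    · simp
  inv_hom_id := by
    ext
    all_goals simp

/-- Localizing subcategories are closed under the summands appearing in
a coproduct of shifts of a single object. -/
lemma shift_summand_mem {L : Set C} (hL : IsLocTensorIdeal C L) (F : C)
    {ι : Type v} (n : ι → ℤ) (hX : (∐ fun i => F⟦n i⟧) ∈ L) (i₀ : ι) :
    F⟦n i₀⟧ ∈ L := by
  set g : (Σ _ : ULift.{v} ℕ, ι) → C := fun p => F⟦n p.2⟧ with hg
  have h1 : (∐ fun _ : ULift.{v} ℕ => ∐ fun i => F⟦n i⟧) ∈ L :=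
    hL.coprod_mem _ (fun _ => hX)
  have h2 : (∐ g) ∈ L :=
    hL.iso_mem (sigmaSigmaIso (fun _ : ULift.{v} ℕ => ι) (fun _ i => F⟦n i⟧)) h1
  set g'' : Option (Σ _ : ULift.{v} ℕ, ι) → C :=
    fun o => Option.elim o (F⟦n i₀⟧) g with hg''
  have w : ∀ o, g ((swindleEquiv i₀) o) ≅ g'' o := by
    intro o
    match o with
    | none => exact Iso.refl _
    | some j => exact eqToIso (by rw [hg, hg'']; simp [swindleEquiv_snd i₀ j]; rfl)
  have h3 : (∐ g'') ∈ L :=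
    hL.iso_mem (Sigma.whiskerEquiv (swindleEquiv i₀) w).symm h2
  have h4 : ((F⟦n i₀⟧) ⊞ (∐ g)) ∈ L := by
    refine hL.iso_mem ?_ h3
    exact optionCoprodIso g''
  have h5 : ((∐ g) ⊞ (F⟦n i₀⟧)) ∈ L := hL.iso_mem (biprod.braiding _ _) h4
  exact hL.ext _ (binaryBiproductTriangle_distinguished (∐ g) (F⟦n i₀⟧)) h2 h5

theorem statement8 (F : C)
    -- `F` is a field object:
    (hfield : ∀ t : C, ∃ (ι : Type v) (n : ι → ℤ),
      Nonempty (t ⊗ F ≅ ∐ fun i => F⟦n i⟧))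
    -- `F ⊗ -` detects nonvanishing on `Locid(F)`:
    (hdetect : ∀ t ∈ Locid C {F}, ¬ IsZero t → ¬ IsZero (F ⊗ t)) :
    ∀ t ∈ Locid C {F}, ¬ IsZero t → Locid C {t} = Locid C {F} := by
  intro t ht hnz
  have htt : t ∈ Locid C {t} := subset_locid C {t} rfl
  obtain ⟨ι, n, ⟨e⟩⟩ := hfield t
  have hFt : ¬ IsZero (F ⊗ t) := hdetect t ht hnz
  have idealT := locid_isIdeal C {t}
  have hmem : (F ⊗ t) ∈ Locid C {t} := idealT.tensor_mem F t htt
  have e2 : F ⊗ t ≅ ∐ fun i => F⟦n i⟧ := (β_ F t) ≪≫ e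
  have hX : (∐ fun i => F⟦n i⟧) ∈ Locid C {t} := idealT.iso_mem e2 hmem
  have hne : Nonempty ι := by
    by_contra h
    have hempty : IsEmpty ι := not_nonempty_iff.mp h
    apply hFt
    refine IsZero.of_iso ?_ e2
    rw [IsZero.iff_id_eq_zero]
    ext i
    exact isEmptyElim i
  obtain ⟨i₀⟩ := hne
  have h6 : F⟦n i₀⟧ ∈ Locid C {t} := shift_summand_mem idealT F n hX i₀
  have h7 : F ∈ Locid C {t} :=
    idealT.iso_mem (shiftShiftNeg F (n i₀)) (idealT.shift_mem _ (-(n i₀)) h6)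
  apply Set.Subset.antisymm
  · exact locid_subset C (locid_isIdeal C {F}) (Set.singleton_subset_iff.mpr ht)
  · exact locid_subset C idealT (Set.singleton_subset_iff.mpr h7)
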